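/- Let x ∈ ℝ, let g be 5 times continuously differentiable on an open set containing x, and let f be 5 times continuously differentiable on an open set containing g(x). Then for all real numbers a₁, a₂, a₃, a₄, a₅, with u := x + a₁ε + a₂ε² + a₃ε³ + a₄ε⁴ + a₅ε⁵ ∈ R⁽⁶⁾, the R⁽⁶⁾-extension preserves composition: Λ(f∘g)(u) = Λ(f)(Λ(g)(u)). -/

import Mathlib

/-- Multiplication in the 6-dimensional truncated polynomial algebra
`R⁽⁶⁾ = ℝ[ε]/(ε⁶)`, with elements represented by their coefficient tuples
`(u 0) + (u 1)ε + (u 2)ε² + (u 3)ε³ + (u 4)ε⁴ + (u 5)ε⁵`. -/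
noncomputable def R6mul (u v : Fin 6 → ℝ) : Fin 6 → ℝ :=
  ![u 0 * v 0,
    u 0 * v 1 + u 1 * v 0,
    u 0 * v 2 + u 1 * v 1 + u 2 * v 0,
    u 0 * v 3 + u 1 * v 2 + u 2 * v 1 + u 3 * v 0,
    u 0 * v 4 + u 1 * v 3 + u 2 * v 2 + u 3 * v 1 + u 4 * v 0,
    u 0 * v 5 + u 1 * v 4 + u 2 * v 3 + u 3 * v 2 + u 4 * v 1 + u 5 * v 0]

/-- The `R⁽⁶⁾`-extension `Λ(f)` of a real function `f`, evaluated at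
`x + a₁ε + a₂ε² + a₃ε³ + a₄ε⁴ + a₅ε⁵` (represented as the tuple `![x,a₁,a₂,a₃,a₄,a₅]`). -/
noncomputable def Lam (f : ℝ → ℝ) (u : Fin 6 → ℝ) : Fin 6 → ℝ :=
  ![f (u 0),
    u 1 * iteratedDeriv 1 f (u 0),
    u 2 * iteratedDeriv 1 f (u 0) + (1/2) * (u 1)^2 * iteratedDeriv 2 f (u 0),
    u 3 * iteratedDeriv 1 f (u 0) + u 1 * u 2 * iteratedDeriv 2 f (u 0)
      + (1/6) * (u 1)^3 * iteratedDeriv 3 f (u 0),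
    u 4 * iteratedDeriv 1 f (u 0)
      + (u 1 * u 3 + (1/2) * (u 2)^2) * iteratedDeriv 2 f (u 0)
      + (1/2) * (u 1)^2 * u 2 * iteratedDeriv 3 f (u 0)
      + (1/24) * (u 1)^4 * iteratedDeriv 4 f (u 0),
    u 5 * iteratedDeriv 1 f (u 0)
      + (u 1 * u 4 + u 2 * u 3) * iteratedDeriv 2 f (u 0)
      + (1/2) * ((u 1)^2 * u 3 + u 1 * (u 2)^2) * iteratedDeriv 3 f (u 0)
      + (1/6) * (u 1)^3 * u 2 * iteratedDeriv 4 f (u 0)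
      + (1/120) * (u 1)^5 * iteratedDeriv 5 f (u 0)]


lemma aux_open (φ : ℝ → ℝ) (c : ℝ) (h : ContDiffAt ℝ 5 φ c) :
    ∃ U : Set ℝ, IsOpen U ∧ c ∈ U ∧ ∀ k < 5, ∀ y ∈ U,
      HasDerivAt (iteratedDeriv k φ) (iteratedDeriv (k+1) φ y) y := by
  obtain ⟨u, hu, hcd⟩ := h.contDiffOn le_rfl (by simp)
  set V := interior u with hV
  have hO : IsOpen V := isOpen_interior
  have c0 : ContDiffOn ℝ 5 φ V := hcd.mono interior_subset
  have c1 : ContDiffOn ℝ 4 (iteratedDeriv 1 φ) V := by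
    rw [iteratedDeriv_one]; exact c0.deriv_of_isOpen hO (by norm_num)
  have c2 : ContDiffOn ℝ 3 (iteratedDeriv 2 φ) V := by
    rw [iteratedDeriv_succ]; exact c1.deriv_of_isOpen hO (by norm_num)
  have c3 : ContDiffOn ℝ 2 (iteratedDeriv 3 φ) V := by
    rw [iteratedDeriv_succ]; exact c2.deriv_of_isOpen hO (by norm_num)
  have c4 : ContDiffOn ℝ 1 (iteratedDeriv 4 φ) V := by
    rw [iteratedDeriv_succ]; exact c3.deriv_of_isOpen hO (by norm_num)
  refine ⟨V, hO, mem_interior_iff_mem_nhds.2 hu, ?_⟩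
  have key : ∀ k < 5, ∀ y ∈ V, DifferentiableAt ℝ (iteratedDeriv k φ) y := by
    intro k hk y hy
    interval_cases k
    · simpa using (c0.differentiableOn (by norm_num)).differentiableAt (hO.mem_nhds hy)
    · exact (c1.differentiableOn (by norm_num)).differentiableAt (hO.mem_nhds hy)
    · exact (c2.differentiableOn (by norm_num)).differentiableAt (hO.mem_nhds hy)
    · exact (c3.differentiableOn (by norm_num)).differentiableAt (hO.mem_nhds hy)
    · exact (c4.differentiableOn (by norm_num)).differentiableAt (hO.mem_nhds hy)
  intro k hk y hy
  have := (key k hk y hy).hasDerivAt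
  rwa [← iteratedDeriv_succ] at this

noncomputable def FdB1 (f g : ℝ → ℝ) (y : ℝ) : ℝ :=
  iteratedDeriv 1 f (g y) * iteratedDeriv 1 g y
noncomputable def FdB2 (f g : ℝ → ℝ) (y : ℝ) : ℝ :=
  iteratedDeriv 2 f (g y) * iteratedDeriv 1 g y ^ 2
    + iteratedDeriv 1 f (g y) * iteratedDeriv 2 g y
noncomputable def FdB3 (f g : ℝ → ℝ) (y : ℝ) : ℝ :=
  iteratedDeriv 3 f (g y) * iteratedDeriv 1 g y ^ 3
    + 3 * (iteratedDeriv 2 f (g y) * (iteratedDeriv 1 g y * iteratedDeriv 2 g y))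
    + iteratedDeriv 1 f (g y) * iteratedDeriv 3 g y
noncomputable def FdB4 (f g : ℝ → ℝ) (y : ℝ) : ℝ :=
  iteratedDeriv 4 f (g y) * iteratedDeriv 1 g y ^ 4
    + 6 * (iteratedDeriv 3 f (g y) * (iteratedDeriv 1 g y ^ 2 * iteratedDeriv 2 g y))
    + 3 * (iteratedDeriv 2 f (g y) * iteratedDeriv 2 g y ^ 2)
    + 4 * (iteratedDeriv 2 f (g y) * (iteratedDeriv 1 g y * iteratedDeriv 3 g y))
    + iteratedDeriv 1 f (g y) * iteratedDeriv 4 g y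
noncomputable def FdB5 (f g : ℝ → ℝ) (y : ℝ) : ℝ :=
  iteratedDeriv 5 f (g y) * iteratedDeriv 1 g y ^ 5
    + 10 * (iteratedDeriv 4 f (g y) * (iteratedDeriv 1 g y ^ 3 * iteratedDeriv 2 g y))
    + 15 * (iteratedDeriv 3 f (g y) * (iteratedDeriv 1 g y * iteratedDeriv 2 g y ^ 2))
    + 10 * (iteratedDeriv 3 f (g y) * (iteratedDeriv 1 g y ^ 2 * iteratedDeriv 3 g y))
    + 10 * (iteratedDeriv 2 f (g y) * (iteratedDeriv 2 g y * iteratedDeriv 3 g y))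
    + 5 * (iteratedDeriv 2 f (g y) * (iteratedDeriv 1 g y * iteratedDeriv 4 g y))
    + iteratedDeriv 1 f (g y) * iteratedDeriv 5 g y

lemma faa (x : ℝ) (g f : ℝ → ℝ)
    (hg : ContDiffAt ℝ 5 g x) (hf : ContDiffAt ℝ 5 f (g x)) :
    iteratedDeriv 1 (f ∘ g) x = FdB1 f g x ∧
    iteratedDeriv 2 (f ∘ g) x = FdB2 f g x ∧
    iteratedDeriv 3 (f ∘ g) x = FdB3 f g x ∧
    iteratedDeriv 4 (f ∘ g) x = FdB4 f g x ∧
    iteratedDeriv 5 (f ∘ g) x = FdB5 f g x := by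
  obtain ⟨U, hUo, hxU, hU⟩ := aux_open g x hg
  obtain ⟨V, hVo, hgV, hV⟩ := aux_open f (g x) hf
  set t := U ∩ g ⁻¹' V with htdef
  have hG0 : ∀ y ∈ U, HasDerivAt g (iteratedDeriv 1 g y) y := by
    intro y hy
    simpa [iteratedDeriv_zero] using hU 0 (by norm_num) y hy
  have hto : IsOpen t := by
    rw [isOpen_iff_mem_nhds]
    intro y hy
    have hc : ContinuousAt g y := (hG0 y hy.1).continuousAt
    exact Filter.inter_mem (hUo.mem_nhds hy.1) (hc.preimage_mem_nhds (hVo.mem_nhds hy.2))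
  have htx : x ∈ t := ⟨hxU, hgV⟩
  have hG : ∀ k < 5, ∀ y ∈ t, HasDerivAt (iteratedDeriv k g) (iteratedDeriv (k+1) g y) y :=
    fun k hk y hy => hU k hk y hy.1
  have hFg : ∀ k < 5, ∀ y ∈ t, HasDerivAt (fun z => iteratedDeriv k f (g z))
      (iteratedDeriv (k+1) f (g y) * iteratedDeriv 1 g y) y :=
    fun k hk y hy => HasDerivAt.comp y (hV k hk (g y) hy.2) (hG0 y hy.1)
  have K1 : ∀ y ∈ t, HasDerivAt (f ∘ g) (FdB1 f g y) y := by
    intro y hy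
    have := hFg 0 (by norm_num) y hy
    simpa [iteratedDeriv_zero, FdB1, Function.comp_def] using this
  have K2 : ∀ y ∈ t, HasDerivAt (FdB1 f g) (FdB2 f g y) y := by
    intro y hy
    have h := (hFg 1 (by norm_num) y hy).mul (hG 1 (by norm_num) y hy)
    refine h.congr_deriv ?_
    simp only [FdB2]; ring
  have K3 : ∀ y ∈ t, HasDerivAt (FdB2 f g) (FdB3 f g y) y := by
    intro y hy
    have h := ((hFg 2 (by norm_num) y hy).mul ((hG 1 (by norm_num) y hy).pow 2)).add
      ((hFg 1 (by norm_num) y hy).mul (hG 2 (by norm_num) y hy))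
    refine h.congr_deriv ?_
    simp only [FdB3, Pi.pow_apply, Pi.mul_apply]; ring
  have K4 : ∀ y ∈ t, HasDerivAt (FdB3 f g) (FdB4 f g y) y := by
    intro y hy
    have h := (((hFg 3 (by norm_num) y hy).mul ((hG 1 (by norm_num) y hy).pow 3)).add
      (((hFg 2 (by norm_num) y hy).mul
        ((hG 1 (by norm_num) y hy).mul (hG 2 (by norm_num) y hy))).const_mul 3)).add
      ((hFg 1 (by norm_num) y hy).mul (hG 3 (by norm_num) y hy))
    refine h.congr_deriv ?_
    simp only [FdB4, Pi.pow_apply, Pi.mul_apply]; ring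
  have K5 : ∀ y ∈ t, HasDerivAt (FdB4 f g) (FdB5 f g y) y := by
    intro y hy
    have h := (((((hFg 4 (by norm_num) y hy).mul ((hG 1 (by norm_num) y hy).pow 4)).add
      (((hFg 3 (by norm_num) y hy).mul
        (((hG 1 (by norm_num) y hy).pow 2).mul (hG 2 (by norm_num) y hy))).const_mul 6)).add
      (((hFg 2 (by norm_num) y hy).mul ((hG 2 (by norm_num) y hy).pow 2)).const_mul 3)).add
      (((hFg 2 (by norm_num) y hy).mul
        ((hG 1 (by norm_num) y hy).mul (hG 3 (by norm_num) y hy))).const_mul 4)).add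
      ((hFg 1 (by norm_num) y hy).mul (hG 4 (by norm_num) y hy))
    refine h.congr_deriv ?_
    simp only [FdB5, Pi.pow_apply, Pi.mul_apply]; ring
  have htn : t ∈ nhds x := hto.mem_nhds htx
  have E1 : deriv (f ∘ g) =ᶠ[nhds x] FdB1 f g :=
    Filter.eventually_of_mem htn fun y hy => (K1 y hy).deriv
  have E2 : deriv (FdB1 f g) =ᶠ[nhds x] FdB2 f g :=
    Filter.eventually_of_mem htn fun y hy => (K2 y hy).deriv
  have E3 : deriv (FdB2 f g) =ᶠ[nhds x] FdB3 f g :=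
    Filter.eventually_of_mem htn fun y hy => (K3 y hy).deriv
  have E4 : deriv (FdB3 f g) =ᶠ[nhds x] FdB4 f g :=
    Filter.eventually_of_mem htn fun y hy => (K4 y hy).deriv
  have E5 : deriv (FdB4 f g) =ᶠ[nhds x] FdB5 f g :=
    Filter.eventually_of_mem htn fun y hy => (K5 y hy).deriv
  have A1 : deriv (f ∘ g) =ᶠ[nhds x] FdB1 f g := E1
  have A2 : deriv (deriv (f ∘ g)) =ᶠ[nhds x] FdB2 f g := A1.deriv.trans E2
  have A3 : deriv (deriv (deriv (f ∘ g))) =ᶠ[nhds x] FdB3 f g := A2.deriv.trans E3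
  have A4 : deriv (deriv (deriv (deriv (f ∘ g)))) =ᶠ[nhds x] FdB4 f g := A3.deriv.trans E4
  have A5 : deriv (deriv (deriv (deriv (deriv (f ∘ g))))) =ᶠ[nhds x] FdB5 f g :=
    A4.deriv.trans E5
  refine ⟨?_, ?_, ?_, ?_, ?_⟩
  · simpa [iteratedDeriv_succ, iteratedDeriv_zero] using A1.eq_of_nhds
  · simpa [iteratedDeriv_succ, iteratedDeriv_zero] using A2.eq_of_nhds
  · simpa [iteratedDeriv_succ, iteratedDeriv_zero] using A3.eq_of_nhds
  · simpa [iteratedDeriv_succ, iteratedDeriv_zero] using A4.eq_of_nhds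
  · simpa [iteratedDeriv_succ, iteratedDeriv_zero] using A5.eq_of_nhds

lemma cons_val_five' {α : Type*} {m : ℕ} (x : α) (u : Fin (m + 5) → α) :
    Matrix.vecCons x u 5
      = Matrix.vecHead (Matrix.vecTail (Matrix.vecTail (Matrix.vecTail (Matrix.vecTail u)))) :=
  rfl

set_option maxHeartbeats 1000000 in
/-- The `R⁽⁶⁾`-extension preserves composition: `Λ(f∘g)(u) = Λ(f)(Λ(g)(u))`. -/
theorem Lam_comp (x : ℝ) (g f : ℝ → ℝ)
    (hg : ContDiffAt ℝ 5 g x) (hf : ContDiffAt ℝ 5 f (g x))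
    (a₁ a₂ a₃ a₄ a₅ : ℝ) :
    Lam (f ∘ g) ![x, a₁, a₂, a₃, a₄, a₅]
      = Lam f (Lam g ![x, a₁, a₂, a₃, a₄, a₅]) := by
  obtain ⟨d1, d2, d3, d4, d5⟩ := faa x g f hg hf
  have e0 : (f ∘ g) x = f (g x) := rfl
  simp only [Lam, Matrix.cons_val_zero, Matrix.cons_val_one, Matrix.head_cons,
    Matrix.cons_val_two, Matrix.tail_cons, Matrix.cons_val_three, Matrix.cons_val_four,
    cons_val_five', e0, d1, d2, d3, d4, d5, FdB1, FdB2, FdB3, FdB4, FdB5]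
  funext i
  fin_cases i <;>
    simp only [Matrix.cons_val_zero, Matrix.cons_val_one, Matrix.head_cons,
      Matrix.cons_val_two, Matrix.tail_cons, Matrix.cons_val_three, Matrix.cons_val_four,
      cons_val_five', Matrix.cons_val_fin_one, Fin.isValue] <;>
    ring
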